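/- Let X be a symmetric matrix, let Q, Q' ⊆ [n] be disjoint, and let h ∈ Q'. If ∑_{i∈Q} X_{ii} + ∑_{j∈Q'} X_{jj} ≤ ∑_{i∈Q}∑_{j∈Q'} X_{ij} + k and ∑_{i∈Q} X_{ih} ≤ X_{hh}, then ∑_{i∈Q} X_{ii} + ∑_{j∈Q'\{h}} X_{jj} ≤ ∑_{i∈Q}∑_{j∈Q'\{h}} X_{ij} + k. -/

import Mathlib

theorem stmt_8 {n : ℕ} (X : Matrix (Fin n) (Fin n) ℝ) (hsymm : X.IsSymm)
    (Q Q' : Finset (Fin n)) (hdisj : Disjoint Q Q') (h : Fin n) (hh : h ∈ Q')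
    (k : ℝ)
    (h1 : ∑ i ∈ Q, X i i + ∑ j ∈ Q', X j j ≤ (∑ i ∈ Q, ∑ j ∈ Q', X i j) + k)
    (h2 : ∑ i ∈ Q, X i h ≤ X h h) :
    ∑ i ∈ Q, X i i + ∑ j ∈ Q'.erase h, X j j ≤
      (∑ i ∈ Q, ∑ j ∈ Q'.erase h, X i j) + k := by
  have e1 : ∑ j ∈ Q', X j j = X h h + ∑ j ∈ Q'.erase h, X j j :=
    (Finset.add_sum_erase _ _ hh).symm
  have e2 : ∑ i ∈ Q, ∑ j ∈ Q', X i j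
      = ∑ i ∈ Q, X i h + ∑ i ∈ Q, ∑ j ∈ Q'.erase h, X i j := by
    rw [← Finset.sum_add_distrib]
    exact Finset.sum_congr rfl fun i _ => (Finset.add_sum_erase _ _ hh).symm
  linarith [h1, h2, e1, e2]
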